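/- Let N ≥ 2 and K ≥ 1 be integers, let X, Y ∈ ℝ^N, let P be a symmetric N×N real matrix, set M := I_N − P, and assume M_{ii} ≠ 0 for all i and M_{ii}M_{jj} + M_{ij}² ≠ 0 for all i ≠ j; define P̃²_{ij} := P_{ij}²/(M_{ii}M_{jj} + M_{ij}²) and Q_{AB} := K^{−1/2} Σ_{i=1}^N Σ_{j≠i} P_{ij} A_i B_j. Fix β₀ ∈ ℝ, set e(β₀) := Y − β₀X, assume Q_{XX} ≠ 0, let β̂_JIVE := (Σ_i Σ_{j≠i} P_{ij} Y_i X_j)/(Σ_i Σ_{j≠i} P_{ij} X_i X_j) and ê := Y − β̂_JIVE·X. Define V̂ := [Σ_i (Σ_{j≠i} P_{ij}X_j)² ê_i (Mê)_i / M_{ii} + Σ_i Σ_{j≠i} P̃²_{ij} (MX)_i ê_i (MX)_j ê_j] / (Σ_i Σ_{j≠i} P_{ij} X_i X_j)², Υ̂ := (1/K) Σ_i (Σ_{j≠i} P_{ij}X_j)² X_i(MX)_i/M_{ii} + (1/K) Σ_i Σ_{j≠i} P̃²_{ij}(MX)_i X_i (MX)_j X_j, Ψ̂(β₀) := (1/K)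 Σ_i (Σ_{j≠i} P_{ij}X_j)² e_i(β₀)(Me(β₀))_i/M_{ii} + (1/K) Σ_i Σ_{j≠i} P̃²_{ij}(MX)_i e_i(β₀)(MX)_j e_j(β₀), and τ̂(β₀) := (1/2)[(1/K) Σ_i (Σ_{j≠i} P_{ij}X_j)² (X_i(Me(β₀))_i/M_{ii} + e_i(β₀)(MX)_i/M_{ii}) + (1/K) Σ_i Σ_{j≠i} P̃²_{ij}((MX)_i X_i (MX)_j e_j(β₀) + (MX)_i e_i(β₀)(MX)_j X_j)]. Then V̂ = [Ψ̂(β₀) − 2(Q_{Xe(β₀)}/Q_{XX})·τ̂(β₀) + (Q_{Xe(β₀)}/Q_{XX})²·Υ̂] / Q_{XX}². -/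
import Mathlib


open Finset Matrix

noncomputable section

/-- `Q_{AB} := K^{-1/2} ∑_i ∑_{j ≠ i} P_{ij} A_i B_j`. -/
def Qstat {N : ℕ} (K : ℕ) (P : Matrix (Fin N) (Fin N) ℝ) (A B : Fin N → ℝ) : ℝ :=
  (Real.sqrt K)⁻¹ * ∑ i, ∑ j ∈ univ.erase i, P i j * A i * B j

/-- The annihilator matrix `M := I - P`. -/
def Mmat {N : ℕ} (P : Matrix (Fin N) (Fin N) ℝ) : Matrix (Fin N) (Fin N) ℝ := 1 - P

/-- `P̃²_{ij} := P_{ij}² / (M_{ii} M_{jj} + M_{ij}²)`. -/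
def Ptilde2 {N : ℕ} (P : Matrix (Fin N) (Fin N) ℝ) (i j : Fin N) : ℝ :=
  P i j ^ 2 / (Mmat P i i * Mmat P j j + Mmat P i j ^ 2)

/-- `Υ̂ := (1/K) ∑_i (∑_{j≠i} P_{ij} X_j)² X_i (MX)_i / M_{ii}
      + (1/K) ∑_i ∑_{j≠i} P̃²_{ij} (MX)_i X_i (MX)_j X_j`. -/
def Upshat {N : ℕ} (K : ℕ) (P : Matrix (Fin N) (Fin N) ℝ) (X : Fin N → ℝ) : ℝ :=
  (1 / (K : ℝ)) * ∑ i, (∑ j ∈ univ.erase i, P i j * X j) ^ 2 *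
      (X i * (Mmat P *ᵥ X) i / Mmat P i i) +
    (1 / (K : ℝ)) * ∑ i, ∑ j ∈ univ.erase i,
      Ptilde2 P i j * ((Mmat P *ᵥ X) i * X i) * ((Mmat P *ᵥ X) j * X j)

/-- `Ψ̂(β₀) := (1/K) ∑_i (∑_{j≠i} P_{ij} X_j)² e_i (Me)_i / M_{ii}
      + (1/K) ∑_i ∑_{j≠i} P̃²_{ij} (MX)_i e_i (MX)_j e_j`,
where `e = e(β₀)`. -/
def Psihat {N : ℕ} (K : ℕ) (P : Matrix (Fin N) (Fin N) ℝ) (X e : Fin N → ℝ) : ℝ :=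
  (1 / (K : ℝ)) * ∑ i, (∑ j ∈ univ.erase i, P i j * X j) ^ 2 *
      (e i * (Mmat P *ᵥ e) i / Mmat P i i) +
    (1 / (K : ℝ)) * ∑ i, ∑ j ∈ univ.erase i,
      Ptilde2 P i j * ((Mmat P *ᵥ X) i * e i) * ((Mmat P *ᵥ X) j * e j)

/-- `τ̂(β₀) := (1/2)[(1/K) ∑_i (∑_{j≠i} P_{ij} X_j)² (X_i (Me)_i / M_{ii} + e_i (MX)_i / M_{ii})
      + (1/K) ∑_i ∑_{j≠i} P̃²_{ij} ((MX)_i X_i (MX)_j e_j + (MX)_i e_i (MX)_j X_j)]`. -/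
def tauhat {N : ℕ} (K : ℕ) (P : Matrix (Fin N) (Fin N) ℝ) (X e : Fin N → ℝ) : ℝ :=
  (1 / 2) *
    ((1 / (K : ℝ)) * ∑ i, (∑ j ∈ univ.erase i, P i j * X j) ^ 2 *
        (X i * (Mmat P *ᵥ e) i / Mmat P i i + e i * (Mmat P *ᵥ X) i / Mmat P i i) +
      (1 / (K : ℝ)) * ∑ i, ∑ j ∈ univ.erase i,
        Ptilde2 P i j * ((Mmat P *ᵥ X) i * X i * ((Mmat P *ᵥ X) j * e j) +
          (Mmat P *ᵥ X) i * e i * ((Mmat P *ᵥ X) j * X j)))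

/-- The JIVE estimator `β̂ := (∑_i ∑_{j≠i} P_{ij} Y_i X_j) / (∑_i ∑_{j≠i} P_{ij} X_i X_j)`. -/
def betaJIVE {N : ℕ} (P : Matrix (Fin N) (Fin N) ℝ) (X Y : Fin N → ℝ) : ℝ :=
  (∑ i, ∑ j ∈ univ.erase i, P i j * Y i * X j) /
    (∑ i, ∑ j ∈ univ.erase i, P i j * X i * X j)

/-- The Mikusheva–Sun variance estimator `V̂`, built from the JIVE residual
`ê := Y - β̂ X`. -/
def Vhat {N : ℕ} (P : Matrix (Fin N) (Fin N) ℝ) (X Y : Fin N → ℝ) : ℝ :=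
  let ehat : Fin N → ℝ := fun i => Y i - betaJIVE P X Y * X i
  (∑ i, (∑ j ∈ univ.erase i, P i j * X j) ^ 2 *
      (ehat i * (Mmat P *ᵥ ehat) i / Mmat P i i) +
    ∑ i, ∑ j ∈ univ.erase i,
      Ptilde2 P i j * ((Mmat P *ᵥ X) i * ehat i) * ((Mmat P *ᵥ X) j * ehat j)) /
    (∑ i, ∑ j ∈ univ.erase i, P i j * X i * X j) ^ 2

end

noncomputable section AuxMS

/-- Auxiliary bilinear form: first variance component. -/
def Asum {N : ℕ} (P : Matrix (Fin N) (Fin N) ℝ) (X u v : Fin N → ℝ) : ℝ :=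
  ∑ i, (∑ j ∈ univ.erase i, P i j * X j) ^ 2 * (u i * (Mmat P *ᵥ v) i / Mmat P i i)

/-- Auxiliary bilinear form: second variance component. -/
def Bsum {N : ℕ} (P : Matrix (Fin N) (Fin N) ℝ) (X u v : Fin N → ℝ) : ℝ :=
  ∑ i, ∑ j ∈ univ.erase i,
    Ptilde2 P i j * ((Mmat P *ᵥ X) i * u i) * ((Mmat P *ᵥ X) j * v j)

lemma mulVec_pt {N : ℕ} (M : Matrix (Fin N) (Fin N) ℝ) (e X : Fin N → ℝ) (c : ℝ) (i : Fin N) :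
    (M *ᵥ fun k => e k - c * X k) i = (M *ᵥ e) i - c * (M *ᵥ X) i := by
  simp [Matrix.mulVec, dotProduct, mul_sub, Finset.sum_sub_distrib, mul_left_comm,
    ← Finset.mul_sum]

lemma A_expand {N : ℕ} (P : Matrix (Fin N) (Fin N) ℝ) (X e : Fin N → ℝ) (c : ℝ) :
    Asum P X (fun i => e i - c * X i) (fun i => e i - c * X i)
      = Asum P X e e - c * (Asum P X X e + Asum P X e X) + c ^ 2 * Asum P X X X := by
  unfold Asum
  simp only [mul_add, Finset.mul_sum, ← Finset.sum_sub_distrib, ← Finset.sum_add_distrib]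
  refine Finset.sum_congr rfl fun i _ => ?_
  rw [mulVec_pt]
  ring

lemma B_expand {N : ℕ} (P : Matrix (Fin N) (Fin N) ℝ) (X e : Fin N → ℝ) (c : ℝ) :
    Bsum P X (fun i => e i - c * X i) (fun i => e i - c * X i)
      = Bsum P X e e - c * (Bsum P X X e + Bsum P X e X) + c ^ 2 * Bsum P X X X := by
  unfold Bsum
  simp only [mul_add, Finset.mul_sum, ← Finset.sum_sub_distrib, ← Finset.sum_add_distrib]
  refine Finset.sum_congr rfl fun i _ => Finset.sum_congr rfl fun j _ => ?_
  ring

lemma sum_erase_swap {N : ℕ} (f : Fin N → Fin N → ℝ) :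
    ∑ i, ∑ j ∈ univ.erase i, f i j = ∑ i, ∑ j ∈ univ.erase i, f j i := by
  rw [Finset.sum_comm' (s' := fun j => univ.erase j) (t' := univ)
    (fun i j => by simp [ne_comm, and_comm])]

lemma Vhat_as_AB {N : ℕ} (P : Matrix (Fin N) (Fin N) ℝ) (X Y : Fin N → ℝ) :
    Vhat P X Y =
      (Asum P X (fun i => Y i - betaJIVE P X Y * X i) (fun i => Y i - betaJIVE P X Y * X i) +
        Bsum P X (fun i => Y i - betaJIVE P X Y * X i) (fun i => Y i - betaJIVE P X Y * X i)) /
      (∑ i, ∑ j ∈ univ.erase i, P i j * X i * X j) ^ 2 := rfl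

lemma Psihat_as_AB {N : ℕ} (K : ℕ) (P : Matrix (Fin N) (Fin N) ℝ) (X e : Fin N → ℝ) :
    Psihat K P X e = (1 / (K : ℝ)) * Asum P X e e + (1 / (K : ℝ)) * Bsum P X e e := rfl

lemma Upshat_as_AB {N : ℕ} (K : ℕ) (P : Matrix (Fin N) (Fin N) ℝ) (X : Fin N → ℝ) :
    Upshat K P X = (1 / (K : ℝ)) * Asum P X X X + (1 / (K : ℝ)) * Bsum P X X X := rfl

lemma tauhat_as_AB {N : ℕ} (K : ℕ) (P : Matrix (Fin N) (Fin N) ℝ) (X e : Fin N → ℝ) :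
    tauhat K P X e = (1 / 2) *
      ((1 / (K : ℝ)) * (Asum P X X e + Asum P X e X) +
       (1 / (K : ℝ)) * (Bsum P X X e + Bsum P X e X)) := by
  unfold tauhat
  have h1 : (∑ i, (∑ j ∈ univ.erase i, P i j * X j) ^ 2 *
        (X i * (Mmat P *ᵥ e) i / Mmat P i i + e i * (Mmat P *ᵥ X) i / Mmat P i i))
      = Asum P X X e + Asum P X e X := by
    unfold Asum
    rw [← Finset.sum_add_distrib]
    exact Finset.sum_congr rfl fun i _ => by ring
  have h2 : (∑ i, ∑ j ∈ univ.erase i,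
        Ptilde2 P i j * ((Mmat P *ᵥ X) i * X i * ((Mmat P *ᵥ X) j * e j) +
          (Mmat P *ᵥ X) i * e i * ((Mmat P *ᵥ X) j * X j)))
      = Bsum P X X e + Bsum P X e X := by
    unfold Bsum
    rw [← Finset.sum_add_distrib]
    refine Finset.sum_congr rfl fun i _ => ?_
    rw [← Finset.sum_add_distrib]
    exact Finset.sum_congr rfl fun j _ => by ring
  rw [h1, h2]

end AuxMS

theorem stmt_2 (N K : ℕ) (hN : 2 ≤ N) (hK : 1 ≤ K)
    (X Y : Fin N → ℝ) (P : Matrix (Fin N) (Fin N) ℝ) (hP : P.IsSymm)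
    (hMii : ∀ i, Mmat P i i ≠ 0)
    (hMij : ∀ i j, i ≠ j → Mmat P i i * Mmat P j j + Mmat P i j ^ 2 ≠ 0)
    (β₀ : ℝ) (e : Fin N → ℝ) (he : e = fun i => Y i - β₀ * X i)
    (hQXX : Qstat K P X X ≠ 0) :
    Vhat P X Y =
      (Psihat K P X e -
          2 * (Qstat K P X e / Qstat K P X X) * tauhat K P X e +
          (Qstat K P X e / Qstat K P X X) ^ 2 * Upshat K P X) /
        Qstat K P X X ^ 2 := by
  have hK0 : (K : ℝ) ≠ 0 := Nat.cast_ne_zero.mpr (by omega)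
  have hsK : Real.sqrt K ≠ 0 := by
    refine ne_of_gt (Real.sqrt_pos.mpr ?_)
    exact_mod_cast Nat.lt_of_lt_of_le Nat.zero_lt_one hK
  set S := ∑ i, ∑ j ∈ univ.erase i, P i j * X i * X j with hSdef
  have hQS : Qstat K P X X = (Real.sqrt K)⁻¹ * S := rfl
  have hS0 : S ≠ 0 := by
    intro h; exact hQXX (by rw [hQS, h, mul_zero])
  set T := ∑ i, ∑ j ∈ univ.erase i, P i j * X i * e j with hTdef
  have hc : Qstat K P X e / Qstat K P X X = T / S := by
    show ((Real.sqrt K)⁻¹ * T) / ((Real.sqrt K)⁻¹ * S) = T / S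
    rw [mul_div_mul_left _ _ (inv_ne_zero hsK)]
  have hTsw : T = ∑ i, ∑ j ∈ univ.erase i, P i j * e i * X j := by
    rw [hTdef, sum_erase_swap]
    refine Finset.sum_congr rfl fun i _ => Finset.sum_congr rfl fun j _ => ?_
    rw [hP.apply j i]; ring
  -- β̂ = β₀ + T/S
  have hbeta : betaJIVE P X Y = β₀ + T / S := by
    have hnum : ∑ i, ∑ j ∈ univ.erase i, P i j * Y i * X j = T + β₀ * S := by
      rw [hTsw, hSdef, Finset.mul_sum, ← Finset.sum_add_distrib]
      refine Finset.sum_congr rfl fun i _ => ?_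
      rw [Finset.mul_sum, ← Finset.sum_add_distrib]
      refine Finset.sum_congr rfl fun j _ => ?_
      have : Y i = e i + β₀ * X i := by rw [he]; ring
      rw [this]; ring
    unfold betaJIVE
    rw [hnum, ← hSdef, add_div, mul_div_assoc, div_self hS0, mul_one, add_comm]
  have hehat : (fun i => Y i - betaJIVE P X Y * X i) = fun i => e i - (T / S) * X i := by
    funext i
    rw [hbeta, he]; ring
  have hKsq : Qstat K P X X ^ 2 = (K : ℝ)⁻¹ * S ^ 2 := by
    rw [hQS, mul_pow, inv_pow, Real.sq_sqrt (by positivity)]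
  rw [Vhat_as_AB, hehat, A_expand, B_expand, Psihat_as_AB, Upshat_as_AB, tauhat_as_AB,
    hc, hKsq, ← hSdef]
  field_simp
  ring
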